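/- Let N > m > 1 and let u be a positive C² radial function on {x ∈ ℝ^N : |x| > R} with u_r < 0, satisfying the radial m-Laplace inequality -(r^{N-1}|u_r|^{m-2}u_r)_r ≥ r^{N-1} u^p with p > m-1, for all r > r_l > R. Then for r > 2r_l, r^{N-1}|u_r(r)|^{m-1} ≥ r^N u(r)^p / (2N), and consequently (u^{-(p-m+1)/(m-1)})_r ≥ ((p-m+1)/(m-1)) (r/(2N))^{1/(m-1)}. -/

import Mathlib

open Real

theorem stmt9 (N m p R rl : ℝ) (hm : 1 < m) (hN : m < N) (hp : m - 1 < p)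
    (hR : 0 < R) (hrl : R < rl) (u : ℝ → ℝ)
    (hreg : ContDiffOn ℝ 2 u (Set.Ioi R))
    (hpos : ∀ r, R < r → 0 < u r)
    (hdec : ∀ r, R < r → deriv u r < 0)
    (hineq : ∀ r, rl < r →
      r ^ (N - 1) * u r ^ p ≤
        -(deriv (fun s => s ^ (N - 1) * |deriv u s| ^ (m - 2) * deriv u s) r)) :
    ∀ r, 2 * rl < r →
      r ^ N * u r ^ p / (2 * N) ≤ r ^ (N - 1) * |deriv u r| ^ (m - 1) ∧
      (p - m + 1) / (m - 1) * (r / (2 * N)) ^ (1 / (m - 1)) ≤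
        deriv (fun s => u s ^ (-(p - m + 1) / (m - 1))) r := by
  intro r hr
  have hN0 : (0:ℝ) < N := by linarith
  have hN1 : (1:ℝ) ≤ N := by linarith
  have hrl0 : (0:ℝ) < rl := lt_trans hR hrl
  have hr2rl : rl < r / 2 := by linarith
  have hr2R : R < r / 2 := by linarith
  have hrR : R < r := by linarith
  have hr0 : (0:ℝ) < r := lt_trans hR hrR
  have hp0 : (0:ℝ) < p := by linarith
  have hur : 0 < u r := hpos r hrR
  set F : ℝ → ℝ := fun s => s ^ (N - 1) * |deriv u s| ^ (m - 2) * deriv u s with hFdef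
  -- differentiability and derivative bound for F on (rl, ∞)
  have hFdiff : ∀ s, rl < s → DifferentiableAt ℝ F s ∧ deriv F s ≤ -(s ^ (N-1) * u s ^ p) := by
    intro s hs
    have hsR : R < s := lt_trans hrl hs
    have hs0 : 0 < s := lt_trans hR hsR
    have h1 := hineq s hs
    have h2 : deriv F s ≤ -(s ^ (N-1) * u s ^ p) := by linarith
    have hus := hpos s hsR
    have hpos' : 0 < s ^ (N-1) * u s ^ p := by positivity
    refine ⟨?_, h2⟩
    by_contra h
    rw [deriv_zero_of_not_differentiableAt h] at h2
    linarith
  -- u is antitone on [r/2, r]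
  have hanti_u : AntitoneOn u (Set.Icc (r/2) r) := by
    have hsub : Set.Icc (r/2) r ⊆ Set.Ioi R := fun x hx => lt_of_lt_of_le hr2R hx.1
    apply antitoneOn_of_deriv_nonpos (convex_Icc _ _)
      (hreg.continuousOn.mono hsub)
    · intro x hx
      rw [interior_Icc] at hx
      exact ((hreg.contDiffAt (isOpen_Ioi.mem_nhds (hsub (Set.mem_Icc_of_Ioo hx)))).differentiableAt
        (by norm_num)).differentiableWithinAt
    · intro x hx
      rw [interior_Icc] at hx
      exact le_of_lt (hdec x (hsub (Set.mem_Icc_of_Ioo hx)))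
  -- the comparison function G
  set G : ℝ → ℝ := fun s => F s + u r ^ p * s ^ N / N with hGdef
  have hanti_G : AntitoneOn G (Set.Icc (r/2) r) := by
    apply antitoneOn_of_deriv_nonpos (convex_Icc _ _)
    · intro s hs
      have hsrl : rl < s := lt_of_lt_of_le hr2rl hs.1
      have hs0 : 0 < s := lt_trans hrl0 hsrl
      exact (((hFdiff s hsrl).1.add
        (((Real.hasDerivAt_rpow_const (Or.inl hs0.ne')).differentiableAt.const_mul
          (u r ^ p)).div_const N)).continuousAt).continuousWithinAt
    · intro s hs
      rw [interior_Icc] at hs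
      have hsrl : rl < s := lt_trans hr2rl hs.1
      have hs0 : 0 < s := lt_trans hrl0 hsrl
      exact ((hFdiff s hsrl).1.add
        (((Real.hasDerivAt_rpow_const (Or.inl hs0.ne')).differentiableAt.const_mul
          (u r ^ p)).div_const N)).differentiableWithinAt
    · intro s hs
      rw [interior_Icc] at hs
      have hsrl : rl < s := lt_trans hr2rl hs.1
      have hs0 : 0 < s := lt_trans hrl0 hsrl
      have hH : HasDerivAt (fun s : ℝ => u r ^ p * s ^ N / N)
          (u r ^ p * (N * s ^ (N-1)) / N) s :=
        ((Real.hasDerivAt_rpow_const (Or.inl hs0.ne')).const_mul (u r ^ p)).div_const N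
      have hGd : deriv G s = deriv F s + u r ^ p * (N * s ^ (N-1)) / N := by
        rw [hGdef, deriv_fun_add (hFdiff s hsrl).1 hH.differentiableAt, hH.deriv]
      have hFd := (hFdiff s hsrl).2
      have hus : u r ≤ u s :=
        hanti_u ⟨hs.1.le, hs.2.le⟩ (Set.right_mem_Icc.2 (by linarith)) hs.2.le
      have hup : u r ^ p ≤ u s ^ p := Real.rpow_le_rpow hur.le hus hp0.le
      have hsN1 : (0:ℝ) < s ^ (N-1) := Real.rpow_pos_of_pos hs0 _
      rw [hGd]
      have hid : u r ^ p * (N * s ^ (N-1)) / N = u r ^ p * s ^ (N-1) := by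
        field_simp
      nlinarith
  have hGle : G r ≤ G (r/2) :=
    hanti_G (Set.left_mem_Icc.2 (by linarith)) (Set.right_mem_Icc.2 (by linarith)) (by linarith)
  have hr20 : (0:ℝ) < r/2 := by linarith
  have hd2 : deriv u (r/2) < 0 := hdec _ hr2R
  have habs2 : 0 < |deriv u (r/2)| := abs_pos.2 hd2.ne
  have hF2 : F (r/2) ≤ 0 := by
    have h1 : 0 < (r/2) ^ (N-1) * |deriv u (r/2)| ^ (m-2) := by positivity
    exact le_of_lt (mul_neg_of_pos_of_neg h1 hd2)
  have hrN : (0:ℝ) < r ^ N := Real.rpow_pos_of_pos hr0 _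
  have hhalf : (r/2) ^ N ≤ r ^ N / 2 := by
    have h1 : (r/2) ^ N = r ^ N * (1/2:ℝ) ^ N := by
      rw [show r/(2:ℝ) = r * (1/2) by ring, Real.mul_rpow hr0.le (by norm_num)]
    have h2 : ((1:ℝ)/2) ^ N ≤ ((1:ℝ)/2) ^ (1:ℝ) :=
      Real.rpow_le_rpow_of_exponent_ge (by norm_num) (by norm_num) hN1
    rw [Real.rpow_one] at h2
    nlinarith
  have hupr : (0:ℝ) < u r ^ p := Real.rpow_pos_of_pos hur _
  have hdr : deriv u r < 0 := hdec r hrR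
  have habsr : 0 < |deriv u r| := abs_pos.2 hdr.ne
  have hFr : F r = -(r ^ (N-1) * |deriv u r| ^ (m-1)) := by
    have h3 : |deriv u r| ^ (m - 1) = |deriv u r| ^ (m-2) * |deriv u r| := by
      rw [show m - 1 = (m-2) + 1 by ring, Real.rpow_add habsr, Real.rpow_one]
    show r ^ (N-1) * |deriv u r| ^ (m-2) * deriv u r = _
    rw [h3, abs_of_neg hdr]; ring
  have hGle2 : F r + u r ^ p * r ^ N / N ≤ F (r/2) + u r ^ p * (r/2) ^ N / N := hGle
  have hq : u r ^ p * ((r/2) ^ N) / N ≤ u r ^ p * (r ^ N / 2) / N :=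
    (div_le_div_iff_of_pos_right hN0).2 (mul_le_mul_of_nonneg_left hhalf hupr.le)
  have hid2 : u r ^ p * r ^ N / N - u r ^ p * (r ^ N / 2) / N = r ^ N * u r ^ p / (2*N) := by
    field_simp; ring
  have part1 : r ^ N * u r ^ p / (2 * N) ≤ r ^ (N - 1) * |deriv u r| ^ (m - 1) := by
    linarith
  refine ⟨part1, ?_⟩
  have hm1 : (0:ℝ) < m - 1 := by linarith
  have hq0 : (0:ℝ) < (p - m + 1) / (m - 1) := div_pos (by linarith) hm1
  have hudiff : DifferentiableAt ℝ u r :=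
    (hreg.contDiffAt (isOpen_Ioi.mem_nhds hrR)).differentiableAt (by norm_num)
  have hder : HasDerivAt (fun s => u s ^ (-(p - m + 1) / (m - 1)))
      (deriv u r * (-(p - m + 1) / (m - 1)) * u r ^ (-(p - m + 1) / (m - 1) - 1)) r :=
    hudiff.hasDerivAt.rpow_const (Or.inl hur.ne')
  rw [hder.deriv]
  -- from part1 : |u'(r)|^(m-1) ≥ (r/(2N)) * u r ^ p
  have hrN1 : (0:ℝ) < r ^ (N-1) := Real.rpow_pos_of_pos hr0 _
  have hidN : r ^ N = r ^ (N-1) * r := by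
    rw [show N = (N-1) + 1 by ring, Real.rpow_add hr0, Real.rpow_one]; ring_nf
  have hX : r/(2*N) * u r ^ p ≤ |deriv u r| ^ (m-1) := by
    apply (mul_le_mul_iff_right₀ hrN1).1
    calc r ^ (N-1) * (r/(2*N) * u r ^ p) = r ^ (N-1) * r * u r ^ p / (2*N) := by ring
      _ ≤ r ^ (N-1) * |deriv u r| ^ (m-1) := by rw [← hidN]; exact part1
  have hXpos : (0:ℝ) < r/(2*N) * u r ^ p := by positivity
  have h5 : (r/(2*N) * u r ^ p) ^ ((1:ℝ)/(m-1)) ≤ |deriv u r| := by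
    have h6 := Real.rpow_le_rpow hXpos.le hX (by positivity : (0:ℝ) ≤ 1/(m-1))
    rwa [← Real.rpow_mul (abs_nonneg _), mul_one_div, div_self hm1.ne', Real.rpow_one] at h6
  have hsplit : (r/(2*N) * u r ^ p) ^ ((1:ℝ)/(m-1))
      = (r/(2*N)) ^ ((1:ℝ)/(m-1)) * u r ^ (p/(m-1)) := by
    rw [Real.mul_rpow (by positivity) hupr.le, ← Real.rpow_mul hur.le, mul_one_div]
  rw [hsplit] at h5
  have he : -(p - m + 1) / (m - 1) - 1 = -(p/(m-1)) := by
    field_simp; ring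
  rw [he]
  have hcomb : u r ^ (p/(m-1)) * u r ^ (-(p/(m-1))) = 1 := by
    rw [← Real.rpow_add hur]; simp
  have hTpos : (0:ℝ) ≤ (r/(2*N)) ^ ((1:ℝ)/(m-1)) := by positivity
  have hupow : (0:ℝ) ≤ u r ^ (-(p/(m-1))) := (Real.rpow_pos_of_pos hur _).le
  calc (p - m + 1) / (m - 1) * (r / (2 * N)) ^ (1 / (m - 1))
      = ((r/(2*N)) ^ ((1:ℝ)/(m-1)) * u r ^ (p/(m-1))) * ((p-m+1)/(m-1))
          * u r ^ (-(p/(m-1))) := by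
        rw [show ((r/(2*N)) ^ ((1:ℝ)/(m-1)) * u r ^ (p/(m-1))) * ((p-m+1)/(m-1))
            * u r ^ (-(p/(m-1)))
          = ((p-m+1)/(m-1)) * (r/(2*N)) ^ ((1:ℝ)/(m-1))
            * (u r ^ (p/(m-1)) * u r ^ (-(p/(m-1)))) by ring, hcomb, mul_one]
    _ ≤ |deriv u r| * ((p-m+1)/(m-1)) * u r ^ (-(p/(m-1))) := by
        apply mul_le_mul_of_nonneg_right (mul_le_mul_of_nonneg_right h5 hq0.le) hupow
    _ = deriv u r * (-(p - m + 1) / (m - 1)) * u r ^ (-(p/(m-1))) := by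
        rw [abs_of_neg hdr]; ring
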